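/- Let q > 3 and α ∈ (0, α*(q)). Define g(t) = ψ(t)²/t^{q-3} on [x₀(α), x₁(α)], where ψ(t) = f'(t)² - 2 f(t) f''(t) and f(t) = t² - 1 - α t^q, and let x̂ be the unique positive critical point of f (the unique positive zero of f'), which lies in (x₀(α), x₁(α)). Then g'(x₀(α)) < 0, g'(x₁(α)) < 0, and g'(x̂) > 0. -/

import Mathlib

open Set Filter MeasureTheory

noncomputable def fQ (q α t : ℝ) : ℝ := t ^ 2 - 1 - α * t ^ q

noncomputable def alphaStar (q : ℝ) : ℝ := 2 / (q - 2) * ((q - 2) / q) ^ (q / 2)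

noncomputable def x0 (q α : ℝ) : ℝ := sInf {t : ℝ | 0 < t ∧ fQ q α t = 0}

noncomputable def x1 (q α : ℝ) : ℝ := sSup {t : ℝ | 0 < t ∧ fQ q α t = 0}

noncomputable def Iq (q α : ℝ) : ℝ := ∫ t in x0 q α..x1 q α, 1 / Real.sqrt (fQ q α t)

noncomputable def fQd1 (q α t : ℝ) : ℝ := 2 * t - α * q * t ^ (q - 1)

noncomputable def fQd2 (q α t : ℝ) : ℝ := 2 - α * q * (q - 1) * t ^ (q - 2)

noncomputable def fQd3 (q α t : ℝ) : ℝ := -(α * q * (q - 1) * (q - 2) * t ^ (q - 3))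

noncomputable def psiQ (q α t : ℝ) : ℝ := fQd1 q α t ^ 2 - 2 * fQ q α t * fQd2 q α t

/- ## Auxiliary lemmas -/

lemma hE_key (q α : ℝ) (hq : 3 < q) (h0 : 0 < α) :
    α * q * ((2 / (α * q)) ^ (1 / (q - 2))) ^ (q - 2) = 2 := by
  have hαq : 0 < α * q := by positivity
  have hb : (0:ℝ) < 2 / (α * q) := by positivity
  have h1 : ((2 / (α * q)) ^ (1 / (q - 2))) ^ (q - 2) = 2 / (α * q) := by
    rw [← Real.rpow_mul hb.le, one_div, inv_mul_cancel₀ (by linarith : q - 2 ≠ 0), Real.rpow_one]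
  rw [h1]; field_simp

lemma crit_unique (q α : ℝ) (hq : 3 < q) (h0 : 0 < α) (t : ℝ) (ht : 0 < t)
    (hz : fQd1 q α t = 0) : t = (2 / (α * q)) ^ (1 / (q - 2)) := by
  have hαq : 0 < α * q := by positivity
  have hsplit : t ^ (q - 1) = t ^ (q - 2) * t := by
    rw [show q - 1 = (q - 2) + 1 by ring, Real.rpow_add ht, Real.rpow_one]
  have h2 : t ^ (q - 2) = 2 / (α * q) := by
    unfold fQd1 at hz
    rw [hsplit] at hz
    have : t * (2 - α * q * t ^ (q - 2)) = 0 := by ring_nf; ring_nf at hz; linarith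
    rcases mul_eq_zero.mp this with h | h
    · exact absurd h ht.ne'
    · field_simp; linarith
  have : t = (t ^ (q - 2)) ^ (1 / (q - 2)) := by
    rw [← Real.rpow_mul ht.le, mul_one_div, div_self (by linarith : q - 2 ≠ 0), Real.rpow_one]
  rw [this, h2]

lemma crit_zero (q α : ℝ) (hq : 3 < q) (h0 : 0 < α) :
    fQd1 q α ((2 / (α * q)) ^ (1 / (q - 2))) = 0 := by
  have hαq : 0 < α * q := by positivity
  set xh := (2 / (α * q)) ^ (1 / (q - 2)) with hxh
  have hx : 0 < xh := Real.rpow_pos_of_pos (by positivity) _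
  have hE := hE_key q α hq h0
  have hsplit : xh ^ (q - 1) = xh ^ (q - 2) * xh := by
    rw [show q - 1 = (q - 2) + 1 by ring, Real.rpow_add hx, Real.rpow_one]
  unfold fQd1
  rw [hsplit]; nlinarith [hE]

lemma xhat_sq_gt (q α : ℝ) (hq : 3 < q) (h0 : 0 < α) (hs : α < alphaStar q) :
    q / (q - 2) < ((2 / (α * q)) ^ (1 / (q - 2))) ^ 2 := by
  have hq2 : (0:ℝ) < q - 2 := by linarith
  have hb : (1:ℝ) < q / (q - 2) := by rw [lt_div_iff₀ hq2]; linarith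
  have hb0 : (0:ℝ) < q / (q - 2) := by positivity
  set b := q / (q - 2) with hbdef
  have hinv : (q - 2) / q = b⁻¹ := by rw [hbdef]; field_simp
  have hstar : alphaStar q = 2 / ((q - 2) * b ^ (q / 2)) := by
    rw [alphaStar, hinv, Real.inv_rpow hb0.le]
    field_simp
  have hstar_pos : 0 < alphaStar q := by
    rw [hstar]; positivity
  have h1 : 2 / (alphaStar q * q) = b ^ ((q - 2) / 2) := by
    rw [hstar]
    have hbq : (0:ℝ) < b ^ (q / 2) := Real.rpow_pos_of_pos hb0 _
    have : 2 / (2 / ((q - 2) * b ^ (q / 2)) * q) = b ^ (q / 2) / b := by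
      have hb2 : b * (q - 2) = q := by rw [hbdef]; exact div_mul_cancel₀ q hq2.ne'
      field_simp [hbdef]; linarith [hb2]
    rw [this, show b ^ (q/2) / b = b ^ (q/2) / b ^ (1:ℝ) by rw [Real.rpow_one],
      ← Real.rpow_sub hb0, show q / 2 - 1 = (q-2)/2 by ring]
  have hlt : 2 / (alphaStar q * q) < 2 / (α * q) := by
    apply div_lt_div_of_pos_left (by norm_num) (by positivity)
    exact mul_lt_mul_of_pos_right hs (by linarith)
  have h2 : b ^ ((1:ℝ)/2) < (2 / (α * q)) ^ (1 / (q - 2)) := by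
    have := Real.rpow_lt_rpow (Real.rpow_pos_of_pos hb0 _).le (h1 ▸ hlt)
      (by positivity : 0 < 1 / (q - 2))
    rwa [← Real.rpow_mul hb0.le, show (q-2)/2 * (1/(q-2)) = 1/2 by field_simp] at this
  have h3 : (b ^ ((1:ℝ)/2)) ^ 2 = b := by
    rw [← Real.rpow_two, ← Real.rpow_mul hb0.le]; norm_num
  calc b = (b ^ ((1:ℝ)/2)) ^ 2 := h3.symm
    _ < _ := by
        apply pow_lt_pow_left₀ h2 (Real.rpow_pos_of_pos hb0 _).le (by norm_num)

lemma cont_fQ (q α : ℝ) (hq : 3 < q) : Continuous (fQ q α) := by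
  have h : Continuous fun t : ℝ => t ^ q := by
    rw [continuous_iff_continuousAt]
    exact fun x => Real.continuousAt_rpow_const x q (Or.inr (by linarith))
  exact ((continuous_pow 2).sub continuous_const).sub (continuous_const.mul h)

lemma root_lb (q α t : ℝ) (h0 : 0 < α) (ht : 0 < t) (hz : fQ q α t = 0) :
    1 < t := by
  have hpow : 0 < α * t ^ q := by
    have := Real.rpow_pos_of_pos ht q; positivity
  unfold fQ at hz
  nlinarith

lemma root_ub (q α t : ℝ) (hq : 3 < q) (h0 : 0 < α) (ht : 0 < t) (hz : fQ q α t = 0) :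
    t ≤ (1 / α) ^ (1 / (q - 2)) := by
  have hsplit : t ^ q = t ^ (q - 2) * t ^ 2 := by
    rw [show t ^ q = t ^ ((q - 2) + 2) by norm_num, Real.rpow_add ht, Real.rpow_two]
  have ht2 : (0:ℝ) < t ^ 2 := by positivity
  have hle : t ^ (q - 2) ≤ 1 / α := by
    unfold fQ at hz
    rw [hsplit] at hz
    rw [le_div_iff₀ h0]
    nlinarith
  calc t = (t ^ (q - 2)) ^ (1 / (q - 2)) := by
        rw [← Real.rpow_mul ht.le, mul_one_div, div_self (by linarith : q - 2 ≠ 0), Real.rpow_one]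
    _ ≤ (1 / α) ^ (1 / (q - 2)) := by
        apply Real.rpow_le_rpow (Real.rpow_pos_of_pos ht _).le hle
          (by rw [one_div, inv_nonneg]; linarith)

lemma hasDeriv_fQ (q α t : ℝ) (ht : 0 < t) : HasDerivAt (fQ q α) (fQd1 q α t) t := by
  have h := ((hasDerivAt_pow 2 t).sub_const 1).sub
    ((Real.hasDerivAt_rpow_const (p := q) (Or.inl ht.ne')).const_mul α)
  refine h.congr_deriv ?_
  unfold fQd1; push_cast; ring

lemma hasDeriv_fQd1 (q α t : ℝ) (ht : 0 < t) : HasDerivAt (fQd1 q α) (fQd2 q α t) t := by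
  have h := ((hasDerivAt_id t).const_mul 2).sub
    ((Real.hasDerivAt_rpow_const (p := q - 1) (Or.inl ht.ne')).const_mul (α * q))
  refine h.congr_deriv ?_
  unfold fQd2; rw [show q - 1 - 1 = q - 2 by ring]; ring

lemma hasDeriv_fQd2 (q α t : ℝ) (ht : 0 < t) : HasDerivAt (fQd2 q α) (fQd3 q α t) t := by
  have h := (hasDerivAt_const t (2:ℝ)).sub
    ((Real.hasDerivAt_rpow_const (p := q - 2) (Or.inl ht.ne')).const_mul (α * q * (q - 1)))
  refine h.congr_deriv ?_
  unfold fQd3; rw [show q - 2 - 1 = q - 3 by ring]; ring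

lemma hasDeriv_psiQ (q α t : ℝ) (ht : 0 < t) :
    HasDerivAt (psiQ q α) (-2 * fQ q α t * fQd3 q α t) t := by
  have h := ((hasDeriv_fQd1 q α t ht).pow 2).sub
    (((hasDeriv_fQ q α t ht).mul (hasDeriv_fQd2 q α t ht)).const_mul 2)
  have hfun : (fun t => fQd1 q α t ^ 2 - 2 * (fQ q α t * fQd2 q α t)) = psiQ q α := by
    funext s; unfold psiQ; ring
  rw [show (fQd1 q α ^ 2 - fun y => 2 * (fQ q α * fQd2 q α) y) = psiQ q α from hfun] at h
  refine h.congr_deriv ?_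
  push_cast; ring

lemma hasDeriv_g (q α t : ℝ) (ht : 0 < t) :
    HasDerivAt (fun t => psiQ q α t ^ 2 / t ^ (q - 3))
      ((2 * psiQ q α t * (-2 * fQ q α t * fQd3 q α t) * t ^ (q - 3)
        - psiQ q α t ^ 2 * ((q - 3) * t ^ (q - 4))) / (t ^ (q - 3)) ^ 2) t := by
  have hA : HasDerivAt (fun t : ℝ => t ^ (q - 3)) ((q - 3) * t ^ (q - 3 - 1)) t :=
    Real.hasDerivAt_rpow_const (Or.inl ht.ne')
  have hAne : t ^ (q - 3) ≠ 0 := (Real.rpow_pos_of_pos ht _).ne'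
  have h := (((hasDeriv_psiQ q α t ht).pow 2)).div hA hAne
  refine h.congr_deriv ?_
  rw [show q - 3 - 1 = q - 4 by ring]; simp only [Pi.pow_apply]; push_cast; ring

/-- for q > 3, with g = ψ²/t^{q-3} and x̂ the unique positive zero of f'
(which lies in (x₀, x₁)): g'(x₀) < 0, g'(x₁) < 0 and g'(x̂) > 0. -/
theorem stmt_9 (q α : ℝ) (hq : 3 < q) (hα : α ∈ Ioo (0 : ℝ) (alphaStar q)) :
    let g : ℝ → ℝ := fun t => psiQ q α t ^ 2 / t ^ (q - 3)
    let xhat : ℝ := (2 / (α * q)) ^ (1 / (q - 2))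
    fQd1 q α xhat = 0 ∧ (∀ t, 0 < t → fQd1 q α t = 0 → t = xhat) ∧
    xhat ∈ Ioo (x0 q α) (x1 q α) ∧
    deriv g (x0 q α) < 0 ∧ deriv g (x1 q α) < 0 ∧ 0 < deriv g xhat := by
  obtain ⟨h0, hs⟩ := hα
  intro g xhat
  have hq2 : (0:ℝ) < q - 2 := by linarith
  have hαq : 0 < α * q := by positivity
  have hx : 0 < xhat := Real.rpow_pos_of_pos (by positivity) _
  have hE : α * q * xhat ^ (q - 2) = 2 := hE_key q α hq h0
  have hsq : q / (q - 2) < xhat ^ 2 := xhat_sq_gt q α hq h0 hs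
  have hqq2 : (1:ℝ) < q / (q - 2) := by rw [lt_div_iff₀ hq2]; linarith
  have hx1 : 1 < xhat := by nlinarith
  -- f(xhat) > 0
  have hxq : xhat ^ q = xhat ^ (q - 2) * xhat ^ 2 := by
    rw [show xhat ^ q = xhat ^ ((q - 2) + 2) by norm_num, Real.rpow_add hx, Real.rpow_two]
  have hF : 0 < fQ q α xhat := by
    have h6 : α * (xhat ^ (q - 2) * xhat ^ 2) = 2 * xhat ^ 2 / q := by
      field_simp
      linear_combination hE
    have h7 : q < xhat ^ 2 * (q - 2) := (div_lt_iff₀ hq2).mp hsq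
    unfold fQ
    rw [hxq, h6]
    rw [show xhat ^ 2 - 1 - 2 * xhat ^ 2 / q = ((q - 2) * xhat ^ 2 - q) / q by
      field_simp; ring]
    apply div_pos (by linarith) (by linarith)
  -- roots on both sides of xhat
  have hcont := cont_fQ q α hq
  have hf1 : fQ q α 1 = -α := by unfold fQ; rw [Real.one_rpow]; ring
  obtain ⟨a, ha, haz⟩ : ∃ a ∈ Ioo 1 xhat, fQ q α a = 0 := by
    have h := intermediate_value_Ioo (le_of_lt hx1) hcont.continuousOn
    have h0m : (0:ℝ) ∈ Ioo (fQ q α 1) (fQ q α xhat) := by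
      rw [hf1]; exact ⟨by linarith, hF⟩
    obtain ⟨a, ha, haz⟩ := h h0m
    exact ⟨a, ha, haz⟩
  set M := (1/α) ^ (1/(q-2)) with hMdef
  have hM : 0 < M := Real.rpow_pos_of_pos (by positivity) _
  set T := M + xhat with hTdef
  have hxT : xhat < T := by simp [hTdef]; linarith
  have hT0 : 0 < T := by linarith
  have hTpow : 1 / α < T ^ (q - 2) := by
    have h1 : M ^ (q - 2) = 1 / α := by
      rw [hMdef, ← Real.rpow_mul (by positivity : (0:ℝ) ≤ 1/α), one_div (q-2),
        inv_mul_cancel₀ (by linarith : q - 2 ≠ 0), Real.rpow_one]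
    calc 1/α = M ^ (q-2) := h1.symm
      _ < T ^ (q-2) := Real.rpow_lt_rpow hM.le (by linarith) hq2
  have hfT : fQ q α T < 0 := by
    have hsplitT : T ^ q = T ^ (q - 2) * T ^ 2 := by
      rw [show T ^ q = T ^ ((q - 2) + 2) by norm_num, Real.rpow_add hT0, Real.rpow_two]
    have hT2 : (0:ℝ) < T ^ 2 := by positivity
    have h8 : 1 < T ^ (q-2) * α := (div_lt_iff₀ h0).mp hTpow
    unfold fQ
    rw [hsplitT]
    nlinarith
  obtain ⟨c, hc, hcz⟩ : ∃ c ∈ Ioo xhat T, fQ q α c = 0 := by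
    have h := intermediate_value_Ioo' (le_of_lt hxT) hcont.continuousOn
    obtain ⟨c, hc, hcz⟩ := h (⟨hfT, hF⟩ : (0:ℝ) ∈ Ioo (fQ q α T) (fQ q α xhat))
    exact ⟨c, hc, hcz⟩
  -- the zero set
  set S := {t : ℝ | 0 < t ∧ fQ q α t = 0} with hSdef
  have hSne : S.Nonempty := ⟨a, ⟨by linarith [ha.1], haz⟩⟩
  have hbdd : BddBelow S := ⟨0, fun t ht => ht.1.le⟩
  have hbddA : BddAbove S := ⟨M, fun t ht => root_ub q α t hq h0 ht.1 ht.2⟩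
  have hSclosed : IsClosed S := by
    have hSeq : S = Ici 1 ∩ fQ q α ⁻¹' {0} := by
      ext t
      simp only [hSdef, mem_setOf_eq, mem_inter_iff, mem_Ici, mem_preimage, mem_singleton_iff]
      constructor
      · rintro ⟨h1, h2⟩; exact ⟨(root_lb q α t h0 h1 h2).le, h2⟩
      · rintro ⟨h1, h2⟩; exact ⟨by linarith, h2⟩
    rw [hSeq]
    exact isClosed_Ici.inter (isClosed_singleton.preimage hcont)
  have hx0S : x0 q α ∈ S := hSclosed.csInf_mem hSne hbdd
  have hx1S : x1 q α ∈ S := hSclosed.csSup_mem hSne hbddA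
  have hx0lt : x0 q α < xhat := by
    have : x0 q α ≤ a := csInf_le hbdd ⟨by linarith [ha.1], haz⟩
    linarith [ha.2]
  have hx1gt : xhat < x1 q α := by
    have : c ≤ x1 q α := le_csSup hbddA ⟨by linarith [hc.1], hcz⟩
    linarith [hc.1]
  -- critical point facts
  have hcz0 : fQd1 q α xhat = 0 := crit_zero q α hq h0
  have huniq : ∀ t, 0 < t → fQd1 q α t = 0 → t = xhat := fun t ht h =>
    crit_unique q α hq h0 t ht h
  -- sign of g' at a root of f
  have hroot_sign : ∀ r, 0 < r → fQ q α r = 0 → r ≠ xhat →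
      deriv (fun t => psiQ q α t ^ 2 / t ^ (q - 3)) r < 0 := by
    intro r hr hrz hrne
    have hne : fQd1 q α r ≠ 0 := fun h => hrne (crit_unique q α hq h0 r hr h)
    have hψ : psiQ q α r = fQd1 q α r ^ 2 := by unfold psiQ; rw [hrz]; ring
    rw [(hasDeriv_g q α r hr).deriv]
    apply div_neg_of_neg_of_pos
    · rw [hrz, hψ]
      have h4 : 0 < fQd1 q α r ^ 2 := lt_of_le_of_ne (sq_nonneg _) (Ne.symm (pow_ne_zero 2 hne))
      have h5 : 0 < r ^ (q - 4) := Real.rpow_pos_of_pos hr _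
      nlinarith [mul_pos (mul_pos (pow_pos h4 2) h5) (show (0:ℝ) < q - 3 by linarith)]
    · exact pow_pos (Real.rpow_pos_of_pos hr _) 2
  refine ⟨hcz0, huniq, ⟨hx0lt, hx1gt⟩, ?_, ?_, ?_⟩
  · exact hroot_sign _ hx0S.1 hx0S.2 (ne_of_lt hx0lt)
  · exact hroot_sign _ (by linarith [hx1gt] : 0 < x1 q α) hx1S.2 (ne_of_gt hx1gt)
  -- sign at xhat
  · have hsplit34 : xhat ^ (q - 3) = xhat ^ (q - 4) * xhat := by
      rw [show q - 3 = (q - 4) + 1 by ring, Real.rpow_add hx, Real.rpow_one]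
    have hsplit24 : xhat ^ (q - 2) = xhat ^ (q - 4) * xhat ^ 2 := by
      rw [show q - 2 = (q - 4) + 2 by ring, Real.rpow_add hx, Real.rpow_two]
    have hE4 : α * q * (xhat ^ (q - 4) * xhat ^ 2) = 2 := by rw [← hsplit24]; exact hE
    have hu : 0 < xhat ^ (q - 4) := Real.rpow_pos_of_pos hx _
    have hψv : psiQ q α xhat = -2 * fQ q α xhat * (4 - 2 * q) := by
      unfold psiQ fQd2
      rw [hcz0]
      linear_combination (2 * fQ q α xhat * (q - 1)) * hE
    have hf3v : fQd3 q α xhat = -(α * q * (q - 1) * (q - 2) * (xhat ^ (q - 4) * xhat)) := by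
      unfold fQd3; rw [hsplit34]
    show 0 < deriv (fun t => psiQ q α t ^ 2 / t ^ (q - 3)) xhat
    rw [(hasDeriv_g q α xhat hx).deriv]
    apply div_pos
    · rw [hψv, hf3v, hsplit34]
      have hfinal : 0 < 16 * fQ q α xhat ^ 2 * (q - 2) ^ 2 * (q + 1) * xhat ^ (q - 4) :=
        mul_pos (mul_pos (mul_pos (mul_pos (by norm_num : (0:ℝ) < 16) (pow_pos hF 2))
          (pow_pos hq2 2)) (by linarith : (0:ℝ) < q + 1)) hu
      have hE5 : α * q * (xhat ^ (q - 4) * xhat ^ 2)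
            * (16 * fQ q α xhat ^ 2 * (q - 1) * (q - 2) ^ 2 * xhat ^ (q - 4))
          = 2 * (16 * fQ q α xhat ^ 2 * (q - 1) * (q - 2) ^ 2 * xhat ^ (q - 4)) := by
        rw [hE4]
      linarith [hE5, hfinal]
    · exact pow_pos (Real.rpow_pos_of_pos hx _) 2
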